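/- With \hat f_δ(s) as in the dynamical root vector of U_q(so5), the identity \hat f_δ(s) f_α^2 = ([s+4]_p [s+3]_p / ([s+2]_p [s+1]_p)) · f_α^2 · \hat f_δ(s+2) holds in the negative Borel part of U_q(so5). -/

import Mathlib

noncomputable section

/-- `(u - u⁻¹)/(p - p⁻¹)`; with `u = p^z` this is the q-number `[z]_p`. -/
def qNum (p u : ℂ) : ℂ := (u - u⁻¹) / (p - p⁻¹)

/-- The dynamical root vector
`\hat f_δ(s) = p^{-2}( f_α² f_β [s]_p/[s+2]_p - f_α f_β f_α [2]_p [s]_p/[s+1]_p + f_β f_α² )`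
of `U_q(so5)`, with `t = p^s`. -/
def fdelta (p t : ℂ) {A : Type*} [Ring A] [Algebra ℂ A] (fa fb : A) : A :=
  (p ^ 2)⁻¹ • ((qNum p t / qNum p (t * p ^ 2)) • (fa * fa * fb)
    - (qNum p (p ^ 2) * qNum p t / qNum p (t * p)) • (fa * fb * fa)
    + fb * fa * fa)

private lemma comb (a b c d e f : ℂ) (hb : b ≠ 0) (hd : d ≠ 0) (hf : f ≠ 0)
    (h : a * d * f - c * b * f = e * (b * d)) : a / b - c / d = e / f := by
  rw [div_sub_div _ _ hb hd, div_eq_div_iff (mul_ne_zero hb hd) hf]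
  linear_combination h

private lemma comb2 (a b c d e f g h : ℂ) (hb : b ≠ 0) (hd : d ≠ 0) (hf : f ≠ 0) (hh : h ≠ 0)
    (heq : a * d * (f * h) - c * b * (f * h) = e * h * (b * d) - g * f * (b * d)) :
    a / b - c / d = e / f - g / h := by
  rw [div_sub_div _ _ hb hd, div_sub_div _ _ hf hh,
    div_eq_div_iff (mul_ne_zero hb hd) (mul_ne_zero hf hh)]
  linear_combination heq

set_option maxHeartbeats 1000000 in
/-- in the negative Borel part of `U_q(so5)` (any `ℂ`-algebra generated by
`f_α, f_β` with the two B2 quantum Serre relations, `q = p²`),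
`\hat f_δ(s)·f_α² = ([s+4]_p[s+3]_p/([s+2]_p[s+1]_p))·f_α²·\hat f_δ(s+2)`. -/
theorem fdelta_fa_sq_commutation {A : Type*} [Ring A] [Algebra ℂ A]
    (p t : ℂ) (hp0 : p ≠ 0) (hp : ∀ n : ℕ, 0 < n → p ^ n ≠ 1) (ht : t ≠ 0)
    (fa fb : A)
    (hSerreLong : fb * fb * fa - (p ^ 2 + (p ^ 2)⁻¹) • (fb * fa * fb) + fa * fb * fb = 0)
    (hSerreShort : fa * fa * fa * fb - qNum p (p ^ 3) • (fa * fa * fb * fa)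
        + qNum p (p ^ 3) • (fa * fb * fa * fa) - fb * fa * fa * fa = 0)
    (hden : ∀ i : ℕ, 1 ≤ i → i ≤ 4 → qNum p (t * p ^ i) ≠ 0) :
    fdelta p t fa fb * (fa * fa)
      = (qNum p (t * p ^ 4) * qNum p (t * p ^ 3) / (qNum p (t * p ^ 2) * qNum p (t * p))) •
          (fa * fa * fdelta p (t * p ^ 2) fa fb) := by
  set c := qNum p (p ^ 3) with hc
  have h0 : fb * (fa * (fa * (fa * fa)))
      = fa * (fa * (fa * (fb * fa))) - c • (fa * (fa * (fb * (fa * fa))))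
        + c • (fa * (fb * (fa * (fa * fa)))) := by
    have h := congrArg (· * fa) hSerreShort
    simp only [sub_mul, add_mul, smul_mul_assoc, zero_mul, mul_assoc] at h
    exact (sub_eq_zero.mp h).symm
  have h4 : fa * (fa * (fa * (fa * fb)))
      = c • (fa * (fa * (fa * (fb * fa)))) - c • (fa * (fa * (fb * (fa * fa))))
        + fa * (fb * (fa * (fa * fa))) := by
    have h := congrArg (fa * ·) hSerreShort
    simp only [mul_sub, mul_add, mul_smul_comm, mul_zero, mul_assoc] at h
    have h' := sub_eq_zero.mp h
    rw [← h']
    abel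
  -- basic nonvanishing facts
  have hpp : p - p⁻¹ ≠ 0 := by
    rw [sub_ne_zero]
    intro h
    apply hp 2 (by norm_num)
    rw [pow_two]
    nth_rewrite 2 [h]
    exact mul_inv_cancel₀ hp0
  have hd : p ^ 2 - 1 ≠ 0 := sub_ne_zero.mpr (hp 2 (by norm_num))
  have htp : ∀ n : ℕ, t * p ^ n ≠ 0 := fun n => mul_ne_zero ht (pow_ne_zero _ hp0)
  have hQ1 : qNum p (t * p) ≠ 0 := by
    have := hden 1 (by norm_num) (by norm_num); simpa using this
  have hQ2 : qNum p (t * p ^ 2) ≠ 0 := hden 2 (by norm_num) (by norm_num)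
  have hQ3 : qNum p (t * p ^ 3) ≠ 0 := hden 3 (by norm_num) (by norm_num)
  have hQ4 : qNum p (t * p ^ 4) ≠ 0 := hden 4 (by norm_num) (by norm_num)
  have w3 : qNum p (t * (p ^ 2 * p)) = qNum p (t * p ^ 3) := by ring_nf
  have w4 : qNum p (t * (p ^ 2 * p ^ 2)) = qNum p (t * p ^ 4) := by ring_nf
  -- canonical form of qNum
  have hq : ∀ u : ℂ, u ≠ 0 → qNum p u = p * (u ^ 2 - 1) / (u * (p ^ 2 - 1)) := by
    intro u hu
    rw [qNum, div_eq_div_iff hpp (mul_ne_zero hu hd)]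
    field_simp
  have r0 := hq t ht
  have r1 := hq (t * p) (mul_ne_zero ht hp0)
  have r2 := hq (t * p ^ 2) (htp 2)
  have r3 := hq (t * p ^ 3) (htp 3)
  have r4 := hq (t * p ^ 4) (htp 4)
  have rp2 := hq (p ^ 2) (pow_ne_zero _ hp0)
  have rp3 := hq (p ^ 3) (pow_ne_zero _ hp0)
  -- the three q-number identities
  have idA : qNum p (p ^ 3) * qNum p (t * p) - qNum p (p ^ 2) * qNum p t
      = qNum p (t * p ^ 3) := by
    simp only [r0, r1, r3, rp2, rp3, div_mul_div_comm]
    exact comb _ _ _ _ _ _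
      (mul_ne_zero (mul_ne_zero (pow_ne_zero _ hp0) hd)
        (mul_ne_zero (mul_ne_zero ht hp0) hd))
      (mul_ne_zero (mul_ne_zero (pow_ne_zero _ hp0) hd) (mul_ne_zero ht hd))
      (mul_ne_zero (htp 3) hd) (by ring)
  have idB : qNum p (p ^ 3) * qNum p (t * p ^ 3) - qNum p (p ^ 2) * qNum p (t * p ^ 4)
      = qNum p (t * p) := by
    simp only [r1, r3, r4, rp2, rp3, div_mul_div_comm]
    exact comb _ _ _ _ _ _
      (mul_ne_zero (mul_ne_zero (pow_ne_zero _ hp0) hd) (mul_ne_zero (htp 3) hd))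
      (mul_ne_zero (mul_ne_zero (pow_ne_zero _ hp0) hd) (mul_ne_zero (htp 4) hd))
      (mul_ne_zero (mul_ne_zero ht hp0) hd) (by ring)
  have idC : qNum p t * qNum p (t * p) - qNum p (p ^ 3) * qNum p (t * p ^ 2) * qNum p (t * p)
      = qNum p (t * p ^ 3) * qNum p (t * p ^ 4)
        - qNum p (p ^ 3) * qNum p (t * p ^ 3) * qNum p (t * p ^ 2) := by
    simp only [r0, r1, r2, r3, r4, rp3, div_mul_div_comm]
    exact comb2 _ _ _ _ _ _ _ _
      (mul_ne_zero (mul_ne_zero ht hd) (mul_ne_zero (mul_ne_zero ht hp0) hd))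
      (mul_ne_zero
        (mul_ne_zero (mul_ne_zero (pow_ne_zero _ hp0) hd) (mul_ne_zero (htp 2) hd))
        (mul_ne_zero (mul_ne_zero ht hp0) hd))
      (mul_ne_zero (mul_ne_zero (htp 3) hd) (mul_ne_zero (htp 4) hd))
      (mul_ne_zero
        (mul_ne_zero (mul_ne_zero (pow_ne_zero _ hp0) hd) (mul_ne_zero (htp 3) hd))
        (mul_ne_zero (htp 2) hd))
      (by ring)
  -- expand and compare coefficients
  simp only [fdelta, smul_mul_assoc, sub_mul, add_mul, smul_smul, mul_smul_comm, mul_sub,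
    mul_add, mul_assoc]
  rw [h0, h4]
  match_scalars
  · rw [hc, w4]
    generalize qNum p (t * p ^ 4) = q4 at *
    generalize qNum p (t * p ^ 3) = q3 at *
    generalize qNum p (t * p ^ 2) = q2 at *
    generalize qNum p (t * p) = q1 at *
    generalize qNum p t = q0 at *
    generalize qNum p (p ^ 3) = c3 at *
    generalize qNum p (p ^ 2) = c2 at *
    field_simp
    linear_combination idC
  · rw [hc, w4]
    generalize qNum p (t * p ^ 4) = q4 at *
    generalize qNum p (t * p ^ 3) = q3 at *
    generalize qNum p (t * p ^ 2) = q2 at *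
    generalize qNum p (t * p) = q1 at *
    generalize qNum p t = q0 at *
    generalize qNum p (p ^ 3) = c3 at *
    generalize qNum p (p ^ 2) = c2 at *
    field_simp
    linear_combination idA
  · rw [hc, w3, w4]
    generalize qNum p (t * p ^ 4) = q4 at *
    generalize qNum p (t * p ^ 3) = q3 at *
    generalize qNum p (t * p ^ 2) = q2 at *
    generalize qNum p (t * p) = q1 at *
    generalize qNum p t = q0 at *
    generalize qNum p (p ^ 3) = c3 at *
    generalize qNum p (p ^ 2) = c2 at *
    field_simp
    linear_combination -idB
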